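/- Let $(\Omega,\Sigma,\lambda)$ be a probability space, $A \in \Sigma$, $\eta \in (0,1)$, and let $f \in L_1(\lambda)$ be a complex-valued function such that $\int_A \mathrm{Re}\, f \, d\lambda = 0$, $\|f\|_1 \le 2\lambda(A)$, and the set $B = \{t : |f(t) - \chi_A(t)| \ge \eta\}$ has measure $\lambda(B) \le \eta$. Then $\int_A |\mathrm{Re}\, f|\,d\lambda \ge 2(\lambda(A) - \eta)(1-\eta)$. -/

import Mathlib

open MeasureTheory

theorem stmt1 {Ω : Type*} [MeasurableSpace Ω] (μ : Measure Ω) [IsProbabilityMeasure μ]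
    (A : Set Ω) (hA : MeasurableSet A) (η : ℝ) (hη0 : 0 < η) (hη1 : η < 1)
    (f : Ω → ℂ) (hf : Integrable f μ)
    (hRe : ∫ t in A, (f t).re ∂μ = 0)
    (hnorm : ∫ t, ‖f t‖ ∂μ ≤ 2 * (μ A).toReal)
    (hB : (μ {t | η ≤ ‖f t - A.indicator (fun _ => (1 : ℂ)) t‖}).toReal ≤ η) :
    2 * ((μ A).toReal - η) * (1 - η) ≤ ∫ t in A, |(f t).re| ∂μ := by
  set f' := hf.aestronglyMeasurable.mk f with hf'def
  have hff' : f =ᵐ[μ] f' := hf.aestronglyMeasurable.ae_eq_mk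
  have hmeas : StronglyMeasurable f' := hf.aestronglyMeasurable.stronglyMeasurable_mk
  have hint' : Integrable f' μ := hf.congr hff'
  set g : Ω → ℝ := fun t => (f' t).re with hgdef
  have hgmeas : Measurable g := Complex.measurable_re.comp hmeas.measurable
  have hgint : Integrable g μ := hint'.re
  set B' : Set Ω := {t | η ≤ ‖f' t - A.indicator (fun _ => (1:ℂ)) t‖} with hB'def
  have hB'meas : MeasurableSet B' := by
    have hm : Measurable fun t => ‖f' t - A.indicator (fun _ => (1:ℂ)) t‖ :=
      (hmeas.measurable.sub (measurable_const.indicator hA)).norm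
    exact measurableSet_le measurable_const hm
  have hμB' : (μ B').toReal ≤ η := by
    have heq : μ B' = μ {t | η ≤ ‖f t - A.indicator (fun _ => (1 : ℂ)) t‖} := by
      apply measure_congr
      rw [Filter.eventuallyEq_set]
      filter_upwards [hff'] with t ht
      simp [hB'def, Set.mem_setOf_eq, ht]
    rw [heq]; exact hB
  set S : Set Ω := A \ B' with hSdef
  have hSmeas : MeasurableSet S := hA.diff hB'meas
  -- measure estimate
  have hAsub : A ⊆ S ∪ B' := by
    intro x hx
    by_cases hxB : x ∈ B'
    · exact Or.inr hxB
    · exact Or.inl ⟨hx, hxB⟩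
  have hμA : (μ A).toReal - η ≤ (μ S).toReal := by
    have h1 : μ A ≤ μ S + μ B' := (measure_mono hAsub).trans (measure_union_le _ _)
    have h2 : (μ A).toReal ≤ (μ S).toReal + (μ B').toReal := by
      rw [← ENNReal.toReal_add (measure_ne_top μ S) (measure_ne_top μ B')]
      exact ENNReal.toReal_mono (by finiteness) h1
    linarith
  -- pointwise bound on S
  have hpt : ∀ t ∈ S, 1 - η ≤ max (g t) 0 := by
    intro t ht
    obtain ⟨htA, htB⟩ := ht
    have hlt : ‖f' t - A.indicator (fun _ => (1:ℂ)) t‖ < η := not_le.mp htB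
    rw [Set.indicator_of_mem htA] at hlt
    have : |(f' t).re - 1| ≤ ‖f' t - 1‖ := by
      have := Complex.abs_re_le_norm (f' t - 1)
      simpa [Complex.sub_re] using this
    have : 1 - η ≤ g t := by
      have h := abs_lt.1 (lt_of_le_of_lt this hlt)
      simp only [hgdef]; linarith [h.1]
    exact le_trans this (le_max_left _ _)
  -- rewrite the target integrals in terms of g
  have hcongr : ∫ t in A, |(f t).re| ∂μ = ∫ t in A, |g t| ∂μ := by
    apply integral_congr_ae
    exact ae_restrict_of_ae (hff'.mono fun t ht => by rw [hgdef]; simp [ht])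
  have hRe' : ∫ t in A, g t ∂μ = 0 := by
    rw [← hRe]
    apply integral_congr_ae
    exact ae_restrict_of_ae (hff'.mono fun t ht => by rw [hgdef]; simp [ht])
  have hmaxint : Integrable (fun t => max (g t) 0) μ := hgint.pos_part
  have habs : ∫ t in A, |g t| ∂μ = 2 * ∫ t in A, max (g t) 0 ∂μ := by
    have hpw : ∀ t, |g t| = 2 * max (g t) 0 - g t := by
      intro t
      rcases le_total (g t) 0 with h | h
      · rw [abs_of_nonpos h, max_eq_right h]; ring
      · rw [abs_of_nonneg h, max_eq_left h]; ring
    calc ∫ t in A, |g t| ∂μ = ∫ t in A, (2 * max (g t) 0 - g t) ∂μ := by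
          exact integral_congr_ae (Filter.Eventually.of_forall fun t => hpw t)
      _ = 2 * ∫ t in A, max (g t) 0 ∂μ - ∫ t in A, g t ∂μ := by
          rw [integral_sub ((hmaxint.const_mul 2).restrict) (hgint.restrict),
            MeasureTheory.integral_const_mul]
      _ = 2 * ∫ t in A, max (g t) 0 ∂μ := by rw [hRe']; ring
  have hmono : ∫ t in S, max (g t) 0 ∂μ ≤ ∫ t in A, max (g t) 0 ∂μ := by
    apply setIntegral_mono_set (hmaxint.restrict)
    · exact Filter.Eventually.of_forall fun t => le_max_right _ _
    · exact HasSubset.Subset.eventuallyLE (Set.diff_subset)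
  have hS : (1 - η) * (μ S).toReal ≤ ∫ t in S, max (g t) 0 ∂μ := by
    have h := setIntegral_ge_of_const_le hSmeas (measure_ne_top μ S) hpt (hmaxint.integrableOn)
    rw [smul_eq_mul, measureReal_def] at h
    linarith [h]
  have hμSnn : (0:ℝ) ≤ (μ S).toReal := ENNReal.toReal_nonneg
  have hη1' : (0:ℝ) ≤ 1 - η := by linarith
  have hfinal : ((μ A).toReal - η) * (1 - η) ≤ (μ S).toReal * (1 - η) :=
    mul_le_mul_of_nonneg_right hμA hη1'
  rw [hcongr, habs]
  nlinarith [hmono, hS, hfinal]
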